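/- For a in (0,π/4) and β = √(1-tan²a), the derivative of Φ(a) = cos(a)·E(β(a)) equals (√((1-β²)(2-β²))/β²)·(K(β) - (2/(2-β²))·E(β)). -/

import Mathlib

open Real Set

noncomputable def ellK (k : ℝ) : ℝ :=
  ∫ θ in (0:ℝ)..(Real.pi/2), 1 / Real.sqrt (1 - k^2 * Real.sin θ ^ 2)

noncomputable def ellE (k : ℝ) : ℝ :=
  ∫ θ in (0:ℝ)..(Real.pi/2), Real.sqrt (1 - k^2 * Real.sin θ ^ 2)

lemma cont_aux {x : ℝ} (hx : x^2 < 1) :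
    ∀ θ : ℝ, 1 - x^2 * Real.sin θ ^ 2 ≥ 1 - x^2 := by
  intro θ
  nlinarith [Real.sin_sq_le_one θ, sq_nonneg x, sq_nonneg (Real.sin θ)]

lemma hasDerivAt_ellE {k : ℝ} (hk0 : 0 < k) (hk1 : k < 1) :
    HasDerivAt ellE ((ellE k - ellK k) / k) k := by
  set c : ℝ := (1 + k) / 2 with hc
  have hc0 : 0 < c := by positivity
  have hc1 : c < 1 := by simp only [hc]; linarith
  have hcc : 0 < 1 - c^2 := by nlinarith
  set ε : ℝ := (1 - k) / 2 with hε
  have hε0 : 0 < ε := by simp only [hε]; linarith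
  -- membership in ball gives x^2 < c^2
  have hball : ∀ x ∈ Metric.ball k ε, x^2 < c^2 := by
    intro x hx
    rw [Metric.mem_ball, Real.dist_eq, abs_lt] at hx
    have h1 : x < c := by simp only [hc]; linarith [hx.2]
    have h2 : -c < x := by simp only [hc]; nlinarith [hx.1]
    nlinarith
  have hDpos : ∀ x : ℝ, x^2 < c^2 → ∀ θ : ℝ, 0 < 1 - x^2 * Real.sin θ ^ 2 := by
    intro x hx θ
    have := cont_aux (x := x) (by nlinarith) θ
    nlinarith
  -- the key application
  have main := intervalIntegral.hasDerivAt_integral_of_dominated_loc_of_deriv_le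
    (F := fun x θ => Real.sqrt (1 - x^2 * Real.sin θ ^ 2))
    (F' := fun x θ => -(2 * x * Real.sin θ ^ 2) / (2 * Real.sqrt (1 - x^2 * Real.sin θ ^ 2)))
    (x₀ := k) (a := 0) (b := Real.pi/2) (μ := MeasureTheory.volume)
    (bound := fun _ => c / Real.sqrt (1 - c^2)) (Metric.ball_mem_nhds k hε0)
    ?_ ?_ ?_ ?_ ?_ ?_
  · -- conclude
    have h2 := main.2
    have heq : (∫ θ in (0:ℝ)..(Real.pi/2),
        -(2 * k * Real.sin θ ^ 2) / (2 * Real.sqrt (1 - k^2 * Real.sin θ ^ 2)))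
        = (ellE k - ellK k) / k := by
      have hk2 : k^2 < 1 := by nlinarith
      have hcongr : ∀ θ ∈ Set.uIcc (0:ℝ) (Real.pi/2),
          -(2 * k * Real.sin θ ^ 2) / (2 * Real.sqrt (1 - k^2 * Real.sin θ ^ 2))
          = (Real.sqrt (1 - k^2 * Real.sin θ ^ 2)
             - 1 / Real.sqrt (1 - k^2 * Real.sin θ ^ 2)) / k := by
        intro θ _
        have hD : 0 < 1 - k^2 * Real.sin θ ^ 2 := by
          have := cont_aux hk2 θ; nlinarith
        have hs : Real.sqrt (1 - k^2 * Real.sin θ ^ 2) > 0 := Real.sqrt_pos.2 hD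
        have hsq : Real.sqrt (1 - k^2 * Real.sin θ ^ 2) ^ 2 = 1 - k^2 * Real.sin θ ^ 2 :=
          Real.sq_sqrt hD.le
        field_simp
        nlinarith [hsq]
      rw [intervalIntegral.integral_congr hcongr]
      have hcontD : Continuous fun θ : ℝ => Real.sqrt (1 - k^2 * Real.sin θ ^ 2) := by
        fun_prop
      have hDne : ∀ θ : ℝ, Real.sqrt (1 - k^2 * Real.sin θ ^ 2) ≠ 0 := by
        intro θ
        have hD : 0 < 1 - k^2 * Real.sin θ ^ 2 := by
          have := cont_aux (by nlinarith) θ; nlinarith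
        exact (Real.sqrt_pos.2 hD).ne'
      have hcont2 : Continuous fun θ : ℝ => 1 / Real.sqrt (1 - k^2 * Real.sin θ ^ 2) :=
        continuous_const.div hcontD hDne
      rw [intervalIntegral.integral_div, intervalIntegral.integral_sub
        (hcontD.intervalIntegrable _ _) (hcont2.intervalIntegrable _ _)]
      rfl
    rw [heq] at h2
    exact h2
  · -- measurability of F x
    filter_upwards with x
    exact (Continuous.aestronglyMeasurable (by fun_prop)).restrict
  · -- integrability of F k
    exact (Continuous.intervalIntegrable (by fun_prop) _ _)
  · -- measurability of F' k
    have hk2 : k^2 < 1 := by nlinarith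
    have hDne : ∀ θ : ℝ, 2 * Real.sqrt (1 - k^2 * Real.sin θ ^ 2) ≠ 0 := by
      intro θ
      have hD : 0 < 1 - k^2 * Real.sin θ ^ 2 := by
        have := cont_aux hk2 θ; nlinarith
      positivity
    exact (Continuous.aestronglyMeasurable
      ((by fun_prop : Continuous fun θ : ℝ => -(2 * k * Real.sin θ ^ 2)).div
        (by fun_prop) hDne)).restrict
  · -- bound
    filter_upwards with θ _ x hx
    have hx2 := hball x hx
    have hD : 0 < 1 - x^2 * Real.sin θ ^ 2 := hDpos x hx2 θ
    have hD2 : 1 - c^2 ≤ 1 - x^2 * Real.sin θ ^ 2 := by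
      have := cont_aux (x := x) (by nlinarith) θ; nlinarith
    have hs1 : Real.sqrt (1 - c^2) ≤ Real.sqrt (1 - x^2 * Real.sin θ ^ 2) :=
      Real.sqrt_le_sqrt hD2
    have hs0 : 0 < Real.sqrt (1 - c^2) := Real.sqrt_pos.2 hcc
    rw [Real.norm_eq_abs, abs_div]
    have hnum : |(-(2 * x * Real.sin θ ^ 2))| ≤ 2 * c := by
      rw [abs_neg]
      have h1 : |x| < c := abs_lt.2 (by constructor <;> nlinarith)
      calc |2 * x * Real.sin θ ^ 2| = 2 * |x| * Real.sin θ ^ 2 := by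
            rw [abs_mul, abs_mul]; simp [abs_of_nonneg (sq_nonneg (Real.sin θ))]
        _ ≤ 2 * c * 1 := by
            apply mul_le_mul (by nlinarith) (Real.sin_sq_le_one θ)
              (sq_nonneg _) (by positivity)
        _ = 2 * c := by ring
    have hden : |2 * Real.sqrt (1 - x^2 * Real.sin θ ^ 2)| = 2 * Real.sqrt (1 - x^2 * Real.sin θ ^ 2) := by
      rw [abs_of_nonneg]; positivity
    rw [hden]
    rw [div_le_div_iff₀ (by positivity) hs0]
    calc |(-(2 * x * Real.sin θ ^ 2))| * Real.sqrt (1 - c^2)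
        ≤ (2 * c) * Real.sqrt (1 - x^2 * Real.sin θ ^ 2) := by
          apply mul_le_mul hnum hs1 hs0.le (by positivity)
      _ = c * (2 * Real.sqrt (1 - x^2 * Real.sin θ ^ 2)) := by ring
  · exact intervalIntegrable_const
  · -- differentiability
    filter_upwards with θ _ x hx
    have hx2 := hball x hx
    have hD : 0 < 1 - x^2 * Real.sin θ ^ 2 := hDpos x hx2 θ
    have hinner : HasDerivAt (fun y : ℝ => 1 - y^2 * Real.sin θ ^ 2)
        (-(2 * x * Real.sin θ ^ 2)) x := by
      have := ((hasDerivAt_pow 2 x).mul_const (Real.sin θ ^ 2)).const_sub 1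
      simpa using this
    exact hinner.sqrt hD.ne'

theorem stmt8 : ∀ a ∈ Ioo (0:ℝ) (Real.pi/4),
    deriv (fun a : ℝ => Real.cos a * ellE (Real.sqrt (1 - Real.tan a ^ 2))) a =
      (Real.sqrt ((1 - (Real.sqrt (1 - Real.tan a ^ 2))^2) *
          (2 - (Real.sqrt (1 - Real.tan a ^ 2))^2)) / (Real.sqrt (1 - Real.tan a ^ 2))^2) *
        (ellK (Real.sqrt (1 - Real.tan a ^ 2)) -
          (2 / (2 - (Real.sqrt (1 - Real.tan a ^ 2))^2)) *
            ellE (Real.sqrt (1 - Real.tan a ^ 2))) := by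
  rintro a ⟨ha0, ha1⟩
  have hpi := Real.pi_pos
  have ha2 : a < Real.pi / 2 := by linarith
  have hca : 0 < Real.cos a := Real.cos_pos_of_mem_Ioo ⟨by linarith, ha2⟩
  have hsa : 0 < Real.sin a := Real.sin_pos_of_pos_of_lt_pi ha0 (by linarith)
  have hta : 0 < Real.tan a := Real.tan_pos_of_pos_of_lt_pi_div_two ha0 ha2
  have hta1 : Real.tan a < 1 := by
    have := Real.tan_lt_tan_of_lt_of_lt_pi_div_two (x := a) (y := Real.pi/4)
      (by linarith) (by linarith) ha1
    simpa [Real.tan_pi_div_four] using this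
  have ht2 : Real.tan a ^ 2 < 1 := by nlinarith
  have htpos : 0 < 1 - Real.tan a ^ 2 := by linarith
  have hK2 : Real.sqrt (1 - Real.tan a ^ 2) ^ 2 = 1 - Real.tan a ^ 2 :=
    Real.sq_sqrt htpos.le
  have hK0 : 0 < Real.sqrt (1 - Real.tan a ^ 2) := Real.sqrt_pos.2 htpos
  have hK1 : Real.sqrt (1 - Real.tan a ^ 2) < 1 := by nlinarith
  have hcne : Real.cos a ≠ 0 := hca.ne'
  have htan : HasDerivAt Real.tan (1 / Real.cos a ^ 2) a := Real.hasDerivAt_tan hcne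
  have hinner : HasDerivAt (fun x : ℝ => 1 - Real.tan x ^ 2)
      (-(2 * Real.tan a * (1 / Real.cos a ^ 2))) a := by
    have := (htan.pow 2).const_sub 1
    simpa [mul_comm, mul_assoc, mul_left_comm] using this
  have hsq : HasDerivAt (fun x : ℝ => Real.sqrt (1 - Real.tan x ^ 2))
      ((-(2 * Real.tan a * (1 / Real.cos a ^ 2))) / (2 * Real.sqrt (1 - Real.tan a ^ 2))) a :=
    hinner.sqrt htpos.ne'
  have hE := hasDerivAt_ellE hK0 hK1
  have hcomp : HasDerivAt (fun x : ℝ => ellE (Real.sqrt (1 - Real.tan x ^ 2)))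
      ((ellE (Real.sqrt (1 - Real.tan a ^ 2)) - ellK (Real.sqrt (1 - Real.tan a ^ 2))) /
          Real.sqrt (1 - Real.tan a ^ 2) *
        (-(2 * Real.tan a * (1 / Real.cos a ^ 2)) / (2 * Real.sqrt (1 - Real.tan a ^ 2)))) a :=
    by have := hE.comp a hsq; exact this
  have hfull : HasDerivAt (fun x => Real.cos x * ellE (Real.sqrt (1 - Real.tan x ^ 2))) _ a :=
    (Real.hasDerivAt_cos a).mul hcomp
  rw [hfull.deriv]
  -- algebra
  set c := Real.cos a with hcdef
  set s := Real.sin a with hsdef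
  set K := Real.sqrt (1 - Real.tan a ^ 2) with hKdef
  set E := ellE K with hEdef
  set Kk := ellK K with hKkdef
  have hsc : s^2 + c^2 = 1 := Real.sin_sq_add_cos_sq a
  have ht : Real.tan a = s / c := Real.tan_eq_sin_div_cos a
  have hKne : K ≠ 0 := hK0.ne'
  have h2K : (0:ℝ) < 2 - K^2 := by nlinarith
  have h2Kc : (2 - K^2) * c^2 = 1 := by
    rw [hK2, ht]; field_simp; linear_combination hsc
  have hone : 1 + Real.tan a ^ 2 = 1 / c^2 := by
    rw [ht]; field_simp; linear_combination hsc
  have hsqrt : Real.sqrt ((1 - K^2) * (2 - K^2)) = s / c^2 := by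
    have h1 : (1 - K^2) * (2 - K^2) = (s/c^2)^2 := by
      rw [hK2]
      have h2 : (1 - (1 - Real.tan a ^ 2)) * (2 - (1 - Real.tan a ^ 2))
          = Real.tan a ^ 2 * (1 + Real.tan a ^ 2) := by ring
      rw [h2, hone, ht]
      field_simp
    rw [h1, Real.sqrt_sq (by positivity)]
  rw [hsqrt]
  rw [ht]
  field_simp
  linear_combination (-E * K^2) * h2Kc
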